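/- Fix γ ∈ (0,1). There exists a unique ρ* ∈ (0, min{γ, 1/2}) satisfying 2·ρ*·log(ρ*) − ρ* = −γ, and this ρ* is the unique global minimizer of the function m(ρ) = log(1/ρ)/(2(γ − ρ)²) over the interval (0, min{γ, 1/2}). -/

import Mathlib

open Real Set Filter Topology

private lemma hasDerivAt_aux (γ x : ℝ) (hx : x ≠ 0) :
    HasDerivAt (fun x : ℝ => 2 * x * Real.log x - x + γ) (2 * Real.log x + 1) x := by
  have h1 : HasDerivAt (fun x : ℝ => 2 * x) 2 x := by
    simpa using (hasDerivAt_id x).const_mul (2 : ℝ)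
  have h2 := h1.mul (Real.hasDerivAt_log hx)
  have h3 := (h2.sub (hasDerivAt_id x)).add_const γ
  refine h3.congr_deriv ?_
  field_simp
  ring

private lemma hasDerivAt_M (γ x : ℝ) (hx : 0 < x) (hxγ : x < γ) :
    HasDerivAt (fun x : ℝ => Real.log (1/x) / (2 * (γ - x)^2))
      (-(2*(γ-x)/x) * (2*x*Real.log x - x + γ) / ((2*(γ-x)^2)^2) ) x := by
  have hM : (fun x : ℝ => Real.log (1/x) / (2 * (γ - x)^2))
      = fun x : ℝ => (-Real.log x) / (2 * (γ - x)^2) := by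
    funext y; rw [one_div, Real.log_inv]
  rw [hM]
  have hu : HasDerivAt (fun x : ℝ => -Real.log x) (-x⁻¹) x :=
    (Real.hasDerivAt_log hx.ne').neg
  have hv1 : HasDerivAt (fun x : ℝ => γ - x) (-1) x := by
    simpa using ((hasDerivAt_id x).const_sub γ)
  have hv : HasDerivAt (fun x : ℝ => 2*(γ - x)^2) (-(4*(γ-x))) x := by
    have := (hv1.pow 2).const_mul (2:ℝ)
    refine this.congr_deriv ?_
    push_cast
    ring
  have hγx : 0 < γ - x := sub_pos.2 hxγ
  have hvne : 2*(γ - x)^2 ≠ 0 := by positivity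
  have := hu.div hv hvne
  refine this.congr_deriv ?_
  rw [div_eq_div_iff (by positivity) (by positivity)]
  field_simp
  ring

/-- For fixed `γ ∈ (0,1)` there is a unique `ρ* ∈ (0, min{γ, 1/2})` with
`2ρ*·log(ρ*) − ρ* = −γ`, and this `ρ*` is the unique global minimizer of
`m(ρ) = log(1/ρ)/(2(γ − ρ)²)` on `(0, min{γ, 1/2})`. -/
theorem min_sampleSize_optimal_rho
    (γ : ℝ) (hγ0 : 0 < γ) (hγ1 : γ < 1) :
    ∃ ρstar : ℝ, ρstar ∈ Set.Ioo 0 (min γ (1/2)) ∧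
      2 * ρstar * Real.log ρstar - ρstar = -γ ∧
      (∀ ρ ∈ Set.Ioo 0 (min γ (1/2)),
        2 * ρ * Real.log ρ - ρ = -γ → ρ = ρstar) ∧
      (∀ ρ ∈ Set.Ioo 0 (min γ (1/2)), ρ ≠ ρstar →
        Real.log (1/ρstar) / (2 * (γ - ρstar)^2) <
          Real.log (1/ρ) / (2 * (γ - ρ)^2)) := by
  set b := min γ (1/2) with hb
  have hb0 : 0 < b := lt_min hγ0 (by norm_num)
  have hbγ : b ≤ γ := min_le_left _ _
  have hb2 : b ≤ 1/2 := min_le_right _ _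
  set f : ℝ → ℝ := fun x => 2 * x * Real.log x - x + γ with hfdef
  have hfc : ContinuousOn f (Ioc 0 (1/2 : ℝ)) := fun x hx =>
    ((hasDerivAt_aux γ x hx.1.ne').continuousAt).continuousWithinAt
  have hanti : StrictAntiOn f (Ioc 0 (1/2 : ℝ)) := by
    apply strictAntiOn_of_deriv_neg (convex_Ioc _ _) hfc
    intro x hx
    rw [interior_Ioc] at hx
    rw [(hasDerivAt_aux γ x hx.1.ne').deriv]
    have h2 : Real.log x < Real.log (1/2) := Real.log_lt_log hx.1 hx.2
    have hl2 : Real.log (1/2 : ℝ) = -Real.log 2 := by rw [one_div, Real.log_inv]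
    have := Real.log_two_gt_d9
    nlinarith
  have hfb : f b < 0 := by
    rcases le_or_gt γ (1/2) with h | h
    · have hbe : b = γ := min_eq_left h
      have hlγ : Real.log γ < 0 := Real.log_neg hγ0 hγ1
      simp only [hfdef, hbe]
      nlinarith
    · have hbe : b = 1/2 := min_eq_right h.le
      have := Real.log_two_gt_d9
      have hl2 : Real.log ((1:ℝ)/2) = -Real.log 2 := by rw [one_div, Real.log_inv]
      simp only [hfdef, hbe]
      nlinarith
  -- find x0 near 0 with f x0 > 0
  have hlim : Tendsto f (𝓝[>] (0:ℝ)) (𝓝 γ) := by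
    have h1 : Tendsto (fun x : ℝ => Real.log x * x) (𝓝[>] (0:ℝ)) (𝓝 0) := by
      have := tendsto_log_mul_rpow_nhdsGT_zero (r := 1) one_pos
      refine this.congr' ?_
      filter_upwards [self_mem_nhdsWithin] with x hx
      rw [Real.rpow_one]
    have h2 : Tendsto (fun x : ℝ => 2 * (Real.log x * x) - x + γ) (𝓝[>] (0:ℝ)) (𝓝 γ) := by
      have := ((h1.const_mul 2).sub (tendsto_id.mono_left nhdsWithin_le_nhds)).add_const γ
      simpa using this
    refine h2.congr ?_
    intro x; simp only [hfdef]; ring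
  have hev : ∀ᶠ x in 𝓝[>] (0:ℝ), 0 < f x := hlim.eventually (eventually_gt_nhds hγ0)
  have hev2 : Ioo (0:ℝ) b ∈ 𝓝[>] (0:ℝ) := Ioo_mem_nhdsGT_of_mem ⟨le_refl 0, hb0⟩
  obtain ⟨x0, hx0f, hx0mem⟩ := (hev.and (eventually_of_mem hev2 fun x hx => hx)).exists
  have hsub : Icc x0 b ⊆ Ioc 0 (1/2 : ℝ) := fun y hy =>
    ⟨lt_of_lt_of_le hx0mem.1 hy.1, le_trans hy.2 hb2⟩
  obtain ⟨ρs, hρsI, hfρs⟩ :=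
    intermediate_value_Icc' (le_of_lt hx0mem.2) (hfc.mono hsub) ⟨hfb.le, hx0f.le⟩
  have hρs0 : 0 < ρs := lt_of_lt_of_le hx0mem.1 hρsI.1
  have hρsb : ρs < b := lt_of_le_of_ne hρsI.2 (fun h => by
    rw [h] at hfρs; exact hfb.ne hfρs)
  have hρsmem : ρs ∈ Ioc (0:ℝ) (1/2) := ⟨hρs0, hρsb.le.trans hb2⟩
  have hpos : ∀ x ∈ Ioo (0:ℝ) ρs, 0 < f x := by
    intro x hx
    have := hanti ⟨hx.1, hx.2.le.trans hρsmem.2⟩ hρsmem hx.2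
    rw [hfρs] at this; exact this
  have hneg : ∀ x ∈ Ioo ρs b, f x < 0 := by
    intro x hx
    have := hanti hρsmem ⟨hρs0.trans hx.1, hx.2.le.trans hb2⟩ hx.1
    rw [hfρs] at this; exact this
  refine ⟨ρs, ⟨hρs0, hρsb⟩, by have := hfρs; simp only [hfdef] at this; linarith, ?_, ?_⟩
  · intro ρ hρ heq
    have hρmem : ρ ∈ Ioc (0:ℝ) (1/2) := ⟨hρ.1, hρ.2.le.trans hb2⟩
    have h2 := hfρs
    simp only [hfdef] at h2
    exact hanti.injOn hρmem hρsmem (by simp only [hfdef]; linarith)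
  · intro ρ hρ hne
    set M : ℝ → ℝ := fun x => Real.log (1/x) / (2 * (γ - x)^2) with hMdef
    have hMc : ∀ x ∈ Ioo (0:ℝ) b, ContinuousAt M x := fun x hx =>
      (hasDerivAt_M γ x hx.1 (hx.2.trans_le hbγ)).continuousAt
    show M ρs < M ρ
    rcases lt_or_gt_of_ne hne with h | h
    · have hIcc : Icc ρ ρs ⊆ Ioo (0:ℝ) b := fun y hy =>
        ⟨hρ.1.trans_le hy.1, lt_of_le_of_lt hy.2 hρsb⟩
      have hmono : StrictAntiOn M (Icc ρ ρs) := by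
        apply strictAntiOn_of_deriv_neg (convex_Icc _ _)
          (fun y hy => (hMc y (hIcc hy)).continuousWithinAt)
        intro x hx
        rw [interior_Icc] at hx
        have hxm : x ∈ Ioo (0:ℝ) b := hIcc ⟨hx.1.le, hx.2.le⟩
        rw [(hasDerivAt_M γ x hxm.1 (hxm.2.trans_le hbγ)).deriv]
        have hfx : 0 < f x := hpos x ⟨hxm.1, hx.2⟩
        have hγx : 0 < γ - x := sub_pos.2 (hxm.2.trans_le hbγ)
        have hd : (0:ℝ) < (2*(γ-x)^2)^2 := pow_pos (mul_pos two_pos (pow_pos hγx 2)) 2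
        apply div_neg_of_neg_of_pos _ hd
        have hq : 0 < 2*(γ-x)/x := div_pos (by linarith) hxm.1
        simp only [hfdef] at hfx
        nlinarith
      exact hmono ⟨le_refl ρ, h.le⟩ ⟨h.le, le_refl ρs⟩ h
    · have hIcc : Icc ρs ρ ⊆ Ioo (0:ℝ) b := fun y hy =>
        ⟨hρs0.trans_le hy.1, lt_of_le_of_lt hy.2 hρ.2⟩
      have hmono : StrictMonoOn M (Icc ρs ρ) := by
        apply strictMonoOn_of_deriv_pos (convex_Icc _ _)
          (fun y hy => (hMc y (hIcc hy)).continuousWithinAt)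
        intro x hx
        rw [interior_Icc] at hx
        have hxm : x ∈ Ioo (0:ℝ) b := hIcc ⟨hx.1.le, hx.2.le⟩
        rw [(hasDerivAt_M γ x hxm.1 (hxm.2.trans_le hbγ)).deriv]
        have hfx : f x < 0 := hneg x ⟨hx.1, hxm.2⟩
        have hγx : 0 < γ - x := sub_pos.2 (hxm.2.trans_le hbγ)
        have hd : (0:ℝ) < (2*(γ-x)^2)^2 := pow_pos (mul_pos two_pos (pow_pos hγx 2)) 2
        apply div_pos _ hd
        have hq : 0 < 2*(γ-x)/x := div_pos (by linarith) hxm.1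
        simp only [hfdef] at hfx
        nlinarith
      exact hmono ⟨le_refl ρs, h.le⟩ ⟨h.le, le_refl ρ⟩ h
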